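/- Let m ≥ 0 be an integer and let N = m + 1. Let t_1, ..., t_N be pairwise distinct complex numbers and z any complex number. Then ∑_{σ ∈ S_N} ∏_{k=1}^{N} ( m − 2 ∑_{l < k} (t_{σ(k)} - z)/(t_{σ(k)} - t_{σ(l)}) ) = 0. -/

import Mathlib

open Finset

private lemma filter_lt_castSucc (n : ℕ) (k : Fin n) :
    (univ.filter (fun l => l < k.castSucc) : Finset (Fin (n + 1)))
      = (univ.filter (fun l => l < k)).map Fin.castSuccEmb := by
  ext l
  simp only [mem_filter, mem_univ, true_and, mem_map]
  constructor
  · intro hl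
    have hne : l ≠ Fin.last n := by
      intro h
      subst h
      exact absurd (lt_of_lt_of_le hl (Fin.le_last _)) (lt_irrefl _)
    rcases Fin.eq_castSucc_or_eq_last l with ⟨j, rfl⟩ | h
    · exact ⟨j, by simpa [Fin.castSucc_lt_castSucc_iff] using hl, rfl⟩
    · exact absurd h hne
  · rintro ⟨j, hj, rfl⟩
    simpa [Fin.castSucc_lt_castSucc_iff] using hj

private lemma filter_lt_last (n : ℕ) :
    (univ.filter (fun l => l < Fin.last n) : Finset (Fin (n + 1)))
      = univ.map Fin.castSuccEmb := by
  ext l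
  simp only [mem_filter, mem_univ, true_and, mem_map]
  constructor
  · intro hl
    rcases Fin.eq_castSucc_or_eq_last l with ⟨j, rfl⟩ | h
    · exact ⟨j, rfl⟩
    · subst h; exact absurd hl (lt_irrefl _)
  · rintro ⟨j, _, rfl⟩
    exact Fin.castSucc_lt_last j

/-- Half-pairing sum: if `x i j + x j i = 1` off the diagonal, then
`∑ i ∑ j, x i (i.succAbove j) = (n+1) * n / 2`. -/
private lemma offdiag_sum (n : ℕ) (x : Fin (n + 1) → Fin (n + 1) → ℂ)
    (hx : ∀ i j, i ≠ j → x i j + x j i = 1) :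
    ∑ i : Fin (n + 1), ∑ j : Fin n, x i (i.succAbove j)
      = ((n : ℂ) + 1) * n / 2 := by
  have hA : ∑ i : Fin (n + 1), ∑ j : Fin n, x i (i.succAbove j)
      = (∑ i : Fin (n + 1), ∑ q : Fin (n + 1), x i q) - ∑ i : Fin (n + 1), x i i := by
    rw [← Finset.sum_sub_distrib]
    refine Finset.sum_congr rfl fun i _ => ?_
    rw [Fin.sum_univ_succAbove (fun q => x i q) i]
    ring
  have hpair : ∑ i : Fin (n + 1), ∑ q : Fin (n + 1), (x i q + x q i)
      = ((n : ℂ) + 1) * ((n : ℂ) + 1) + (2 * ∑ i : Fin (n + 1), x i i - ((n : ℂ) + 1)) := by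
    have step : ∀ i q : Fin (n + 1),
        x i q + x q i = (if q = i then 2 * x i i - 1 else 0) + 1 := by
      intro i q
      by_cases h : q = i
      · subst h; simp; ring
      · simp [h, hx i q (fun hh => h hh.symm)]
    calc ∑ i : Fin (n + 1), ∑ q : Fin (n + 1), (x i q + x q i)
        = ∑ i : Fin (n + 1), ∑ q : Fin (n + 1),
            ((if q = i then 2 * x i i - 1 else 0) + 1) := by
          refine Finset.sum_congr rfl fun i _ => Finset.sum_congr rfl fun q _ => step i q
      _ = ∑ i : Fin (n + 1), ((2 * x i i - 1) + ((n : ℂ) + 1)) := by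
          refine Finset.sum_congr rfl fun i _ => ?_
          rw [Finset.sum_add_distrib, Finset.sum_ite_eq' univ i (fun _ => 2 * x i i - 1)]
          simp
      _ = ((n : ℂ) + 1) * ((n : ℂ) + 1) + (2 * ∑ i : Fin (n + 1), x i i - ((n : ℂ) + 1)) := by
          rw [Finset.sum_add_distrib, Finset.sum_sub_distrib, ← Finset.mul_sum]
          simp [Finset.sum_const, Fintype.card_fin]
          ring
  have hswap : ∑ i : Fin (n + 1), ∑ q : Fin (n + 1), x q i
      = ∑ i : Fin (n + 1), ∑ q : Fin (n + 1), x i q := Finset.sum_comm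
  have hBB : ∑ i : Fin (n + 1), ∑ q : Fin (n + 1), (x i q + x q i)
      = 2 * ∑ i : Fin (n + 1), ∑ q : Fin (n + 1), x i q := by
    simp only [Finset.sum_add_distrib, hswap, two_mul]
  rw [hA]
  have h := hBB.symm.trans hpair
  linear_combination h / 2

/-- The general sum–product identity:
`∑_{σ∈S_n} ∏_k (b + a ∑_{l<k} x_{σ(k)σ(l)}) = n! ∏_{j<n} (b + j a/2)`
whenever `x i j + x j i = 1` for `i ≠ j`. -/
private lemma key (n : ℕ) : ∀ (x : Fin n → Fin n → ℂ),
    (∀ i j, i ≠ j → x i j + x j i = 1) → ∀ (b a : ℂ),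
    ∑ σ : Equiv.Perm (Fin n), ∏ k : Fin n,
        (b + a * ∑ l ∈ univ.filter (fun l => l < k), x (σ k) (σ l))
      = (n.factorial : ℂ) * ∏ j ∈ Finset.range n, (b + (j : ℂ) * a / 2) := by
  induction n with
  | zero => intro x hx b a; simp
  | succ n ih =>
    intro x hx b a
    set f : Fin (n + 1) → Equiv.Perm (Fin n) → Fin (n + 1) → Fin (n + 1) :=
      fun i e => Fin.lastCases i (fun k => i.succAbove (e k)) with hfdef
    have hfcast : ∀ i e (k : Fin n), f i e k.castSucc = i.succAbove (e k) := by
      intro i e k; simp [hfdef]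
    have hflast : ∀ i e, f i e (Fin.last n) = i := by
      intro i e; simp [hfdef]
    have hfinj : ∀ i e, Function.Injective (f i e) := by
      intro i e a1 a2 h
      rcases Fin.eq_castSucc_or_eq_last a1 with ⟨j1, rfl⟩ | h1 <;>
        rcases Fin.eq_castSucc_or_eq_last a2 with ⟨j2, rfl⟩ | h2
      · rw [hfcast, hfcast] at h
        have h2 := Fin.succAbove_right_injective h
        exact congrArg Fin.castSucc (e.injective h2)
      · subst h2; rw [hfcast, hflast] at h
        exact absurd h (Fin.succAbove_ne i (e j1))
      · subst h1; rw [hflast, hfcast] at h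
        exact absurd h.symm (Fin.succAbove_ne i (e j2))
      · subst h1; subst h2; rfl
    set F : Fin (n + 1) × Equiv.Perm (Fin n) → Equiv.Perm (Fin (n + 1)) :=
      fun p => Equiv.ofBijective (f p.1 p.2)
        (Finite.injective_iff_bijective.mp (hfinj p.1 p.2)) with hFdef
    have hFapp : ∀ (i : Fin (n + 1)) (e : Equiv.Perm (Fin n)) (m : Fin (n + 1)),
        F (i, e) m = f i e m := fun i e m => rfl
    have hFbij : Function.Bijective F := by
      rw [Fintype.bijective_iff_injective_and_card]
      constructor
      · rintro ⟨i1, e1⟩ ⟨i2, e2⟩ h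
        have h1 : i1 = i2 := by
          have := DFunLike.congr_fun h (Fin.last n)
          rwa [hFapp, hFapp, hflast, hflast] at this
        subst h1
        have h2 : e1 = e2 := by
          ext k
          have := DFunLike.congr_fun h (Fin.castSucc k)
          rw [hFapp, hFapp, hfcast, hfcast] at this
          exact congrArg Fin.val (Fin.succAbove_right_injective this)
        rw [h2]
      · simp [Fintype.card_perm, Nat.factorial_succ]
    have hsplit := Fintype.sum_bijective F hFbij
      (fun p => ∏ k : Fin (n + 1),
        (b + a * ∑ l ∈ univ.filter (fun l => l < k), x (F p k) (F p l)))
      (fun σ => ∏ k : Fin (n + 1),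
        (b + a * ∑ l ∈ univ.filter (fun l => l < k), x (σ k) (σ l)))
      (fun p => rfl)
    rw [← hsplit, Fintype.sum_prod_type]
    have hinner : ∀ (i : Fin (n + 1)) (e : Equiv.Perm (Fin n)),
        (∏ k : Fin (n + 1),
          (b + a * ∑ l ∈ univ.filter (fun l => l < k), x (F (i, e) k) (F (i, e) l)))
        = (∏ k : Fin n, (b + a * ∑ l ∈ univ.filter (fun l => l < k),
            (fun p q : Fin n => x (i.succAbove p) (i.succAbove q)) (e k) (e l)))
          * (b + a * ∑ j : Fin n, x i (i.succAbove j)) := by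
      intro i e
      have hemb : ∀ l : Fin n, (Fin.castSuccEmb l : Fin (n + 1)) = l.castSucc :=
        fun l => rfl
      rw [Fin.prod_univ_castSucc]
      congr 1
      · refine Finset.prod_congr rfl fun k _ => ?_
        rw [filter_lt_castSucc, Finset.sum_map]
        simp only [hFapp, hemb, hfcast]
      · rw [filter_lt_last, Finset.sum_map]
        simp only [hFapp, hemb, hfcast, hflast]
        rw [Equiv.sum_comp e (fun j => x i (i.succAbove j))]
    have hfix : ∀ i : Fin (n + 1),
        ∑ e : Equiv.Perm (Fin n), (∏ k : Fin (n + 1),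
          (b + a * ∑ l ∈ univ.filter (fun l => l < k), x (F (i, e) k) (F (i, e) l)))
        = ((n.factorial : ℂ) * ∏ j ∈ Finset.range n, (b + (j : ℂ) * a / 2))
          * (b + a * ∑ j : Fin n, x i (i.succAbove j)) := by
      intro i
      rw [Finset.sum_congr rfl fun e _ => hinner i e, ← Finset.sum_mul,
        ih (fun p q => x (i.succAbove p) (i.succAbove q))
          (fun p q hpq => hx _ _ (fun h => hpq (Fin.succAbove_right_injective h))) b a]
    rw [Finset.sum_congr rfl fun i _ => hfix i, ← Finset.mul_sum]
    have hsum : ∑ i : Fin (n + 1), (b + a * ∑ j : Fin n, x i (i.succAbove j))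
        = ((n : ℂ) + 1) * (b + (n : ℂ) * a / 2) := by
      rw [Finset.sum_add_distrib, ← Finset.mul_sum, offdiag_sum n x hx]
      simp only [Finset.sum_const, Finset.card_univ, Fintype.card_fin, nsmul_eq_mul]
      push_cast
      ring
    rw [hsum, Finset.prod_range_succ, Nat.factorial_succ]
    push_cast
    ring

/-- Specialization `b = m`, `a = -2`, `N = m+1` of the sum–product identity:
`∑_{σ∈S_{m+1}} ∏_{k} (m − 2 ∑_{l<k} (t_{σ(k)}-z)/(t_{σ(k)}-t_{σ(l)})) = 0`. -/
theorem sum_product_vanishing (m : ℕ) (t : Fin (m + 1) → ℂ)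
    (ht : Function.Injective t) (z : ℂ) :
    ∑ σ : Equiv.Perm (Fin (m + 1)), ∏ k : Fin (m + 1),
        ((m : ℂ) - 2 * ∑ l ∈ univ.filter (fun l => l < k),
          (t (σ k) - z) / (t (σ k) - t (σ l))) = 0 := by
  set x : Fin (m + 1) → Fin (m + 1) → ℂ := fun i j => (t i - z) / (t i - t j) with hxdef
  have hx : ∀ i j, i ≠ j → x i j + x j i = 1 := by
    intro i j hij
    have h1 : t i - t j ≠ 0 := sub_ne_zero.mpr (fun h => hij (ht h))
    have h2 : t j - t i ≠ 0 := sub_ne_zero.mpr (fun h => hij (ht h).symm)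
    show (t i - z) / (t i - t j) + (t j - z) / (t j - t i) = 1
    rw [div_add_div _ _ h1 h2, div_eq_one_iff_eq (mul_ne_zero h1 h2)]
    ring
  have hk := key (m + 1) x hx (m : ℂ) (-2)
  have hterm : ∀ σ : Equiv.Perm (Fin (m + 1)),
      ∏ k : Fin (m + 1), ((m : ℂ) - 2 * ∑ l ∈ univ.filter (fun l => l < k),
          (t (σ k) - z) / (t (σ k) - t (σ l)))
        = ∏ k : Fin (m + 1), ((m : ℂ) + (-2) * ∑ l ∈ univ.filter (fun l => l < k),
          x (σ k) (σ l)) := by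
    intro σ
    refine Finset.prod_congr rfl fun k _ => ?_
    simp [hxdef]
    ring
  rw [Finset.sum_congr rfl (fun σ _ => hterm σ), hk]
  have : ((m : ℂ) + (m : ℂ) * (-2) / 2) = 0 := by ring
  rw [Finset.prod_eq_zero (Finset.self_mem_range_succ m) this, mul_zero]
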